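/- In the semigroup H, for any nonempty word X and any (possibly empty) words V, Z, all in the letters a1, a2, a3: P·X·V·R·Z·s1·Q·X = X·P·V·R·s1·Z·X·Q. -/

import Mathlib

inductive Phi
  | L | M | P | Q | R | g | s1 | s2 | t1 | t2 | t3 | a1 | a2 | a3
deriving DecidableEq

open Phi

abbrev W0 := WithZero (FreeMonoid Phi)

def w (l : List Phi) : W0 := ((FreeMonoid.ofList l : FreeMonoid Phi) : W0)

def ai : Fin 3 → Phi
  | 0 => a1 | 1 => a2 | 2 => a3

def ti : Fin 3 → Phi
  | 0 => t1 | 1 => t2 | 2 => t3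

def si : Fin 2 → Phi
  | 0 => s1 | 1 => s2

/-- `x` is one of the letters `a1, a2, a3`. -/
def isA (x : Phi) : Prop := x = a1 ∨ x = a2 ∨ x = a3

/-- The defining relations (1)–(14) of the semigroup `H`. -/
inductive rel : W0 → W0 → Prop
  | r1L (x : Phi) : rel (w [x, L]) 0
  | r1M (x : Phi) : rel (w [x, M]) 0
  | r2 : rel (w [L]) (w [M, P, g])
  | r3 (i : Fin 3) : rel (w [g, ai i]) (w [ai i, g])
  | r4 (x : Phi) (h : ¬ isA x) : rel (w [g, x]) 0
  | r5 (i j : Fin 3) : rel (w [ai i, g, ai j]) (w [ai i, R, s1, Q, ai j])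
  | r6 (i : Fin 3) (x : Phi) (h : x = R ∨ isA x) : rel (w [ti i, x]) (w [x, ti i])
  | r7 (i : Fin 3) : rel (w [P, ai i, ti i]) (w [ai i, P, s1])
  | r8 (i j : Fin 3) (h : i ≠ j) : rel (w [P, ai j, ti i]) (w [ai j, P, s2])
  | r9 (i : Fin 3) (j : Fin 2) : rel (w [si j, ai i]) (w [ai i, si j])
  | r10 : rel (w [s1, R]) (w [R, s1])
  | r11 (i : Fin 3) : rel (w [s1, Q, ai i]) (w [ti i, ai i, Q])
  | r12 : rel (w [P, R, s1]) 0
  | r13 (i : Fin 3) : rel (w [s2, R, ai i]) (w [ai i, s2, R])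
  | r14 (i : Fin 3) : rel (w [s2, R, Q, ai i]) (w [R, ti i, ai i, Q])

/-- The congruence on the free monoid with zero generated by the relations. -/
def hCon : Con W0 := conGen rel

/-- The semigroup (with zero) `H` of the paper. -/
abbrev H := hCon.Quotient

/-- The quotient map. -/
def q : W0 →* H := hCon.mk'

/-- `l` is a word in the letters `a1, a2, a3`. -/
def Aword (l : List Phi) : Prop := ∀ x ∈ l, isA x

/-- `l` is square-free: it contains no factor `Y ++ Y` with `Y` nonempty. -/
def SqFree (l : List Phi) : Prop := ∀ Y : List Phi, Y ≠ [] → ¬ (Y ++ Y) <:+: l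

lemma w_append (l1 l2 : List Phi) : w (l1 ++ l2) = w l1 * w l2 := by
  simp [w, ← WithZero.coe_mul]

lemma q_rel {u v : List Phi} (h : rel (w u) (w v)) : q (w u) = q (w v) :=
  (Con.eq hCon).2 (ConGen.Rel.of _ _ h)

lemma key (A B : List Phi) {u v : List Phi} (h : rel (w u) (w v)) :
    q (w (A ++ u ++ B)) = q (w (A ++ v ++ B)) := by
  simp only [w_append, map_mul, q_rel h]

lemma wcongr {l1 l2 : List Phi} (h : l1 = l2) : q (w l1) = q (w l2) := by rw [h]

lemma isA_ex {x : Phi} (h : isA x) : ∃ k : Fin 3, ai k = x := by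
  rcases h with h | h | h
  · exact ⟨0, h.symm⟩
  · exact ⟨1, h.symm⟩
  · exact ⟨2, h.symm⟩

/-- move `ti i` to the left through a list of `R`s and `a`s. -/
lemma tmove (i : Fin 3) (l : List Phi) (hl : ∀ x ∈ l, x = R ∨ isA x) (A B : List Phi) :
    q (w (A ++ l ++ [ti i] ++ B)) = q (w (A ++ [ti i] ++ l ++ B)) := by
  induction l generalizing A with
  | nil => simp
  | cons x l ih =>
    have hx : x = R ∨ isA x := hl x List.mem_cons_self
    have hrest : ∀ y ∈ l, y = R ∨ isA y := fun y hy => hl y (List.mem_cons_of_mem _ hy)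
    calc q (w (A ++ (x :: l) ++ [ti i] ++ B))
        = q (w ((A ++ [x]) ++ l ++ [ti i] ++ B)) := wcongr (by simp)
      _ = q (w ((A ++ [x]) ++ [ti i] ++ l ++ B)) := ih hrest (A ++ [x])
      _ = q (w (A ++ [x, ti i] ++ (l ++ B))) := wcongr (by simp)
      _ = q (w (A ++ [ti i, x] ++ (l ++ B))) := (key A (l ++ B) (rel.r6 i x hx)).symm
      _ = q (w (A ++ [ti i] ++ (x :: l) ++ B)) := wcongr (by simp)

/-- move `s1` to the right through a list of `R`s and `a`s. -/
lemma smove (l : List Phi) (hl : ∀ x ∈ l, x = R ∨ isA x) (A B : List Phi) :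
    q (w (A ++ [s1] ++ l ++ B)) = q (w (A ++ l ++ [s1] ++ B)) := by
  induction l generalizing A with
  | nil => simp
  | cons x l ih =>
    have hx : x = R ∨ isA x := hl x List.mem_cons_self
    have hrest : ∀ y ∈ l, y = R ∨ isA y := fun y hy => hl y (List.mem_cons_of_mem _ hy)
    have swap : q (w (A ++ [s1, x] ++ (l ++ B))) = q (w (A ++ [x, s1] ++ (l ++ B))) := by
      rcases hx with h | h
      · subst h; exact key A (l ++ B) rel.r10
      · obtain ⟨k, hk⟩ := isA_ex h
        subst hk
        exact key A (l ++ B) (rel.r9 k 0)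
    calc q (w (A ++ [s1] ++ (x :: l) ++ B))
        = q (w (A ++ [s1, x] ++ (l ++ B))) := wcongr (by simp)
      _ = q (w (A ++ [x, s1] ++ (l ++ B))) := swap
      _ = q (w ((A ++ [x]) ++ [s1] ++ l ++ B)) := wcongr (by simp)
      _ = q (w ((A ++ [x]) ++ l ++ [s1] ++ B)) := ih hrest (A ++ [x])
      _ = q (w (A ++ (x :: l) ++ [s1] ++ B)) := wcongr (by simp)

lemma memA {l : List Phi} (h : Aword l) : ∀ x ∈ l, x = R ∨ isA x :=
  fun x hx => Or.inr (h x hx)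

lemma mem_app {p : Phi → Prop} {l1 l2 : List Phi} (h1 : ∀ x ∈ l1, p x) (h2 : ∀ x ∈ l2, p x) :
    ∀ x ∈ l1 ++ l2, p x := by
  intro x hx
  rcases List.mem_append.1 hx with h | h
  · exact h1 x h
  · exact h2 x h

/-- The main invariant. -/
lemma inv (T : List Phi) (hT : Aword T) :
    ∀ Y V Z : List Phi, Aword Y → Aword V → Aword Z →
    q (w (Y ++ [P] ++ T ++ V ++ [R] ++ Z ++ Y ++ [s1, Q] ++ T)) =
      q (w ((Y ++ T) ++ [P] ++ V ++ [R] ++ Z ++ (Y ++ T) ++ [s1, Q])) := by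
  induction T with
  | nil =>
    intro Y V Z _ _ _
    exact wcongr (by simp)
  | cons a T ih =>
    intro Y V Z hY hV hZ
    have ha : isA a := hT a List.mem_cons_self
    have hT' : Aword T := fun y hy => hT y (List.mem_cons_of_mem _ hy)
    obtain ⟨j, hj⟩ := isA_ex ha
    subst hj
    -- the commuting list for the t-move: T ++ V ++ [R] ++ Z ++ Y
    have hc1 : ∀ x ∈ T ++ V ++ [R] ++ Z ++ Y, x = R ∨ isA x := by
      apply mem_app (mem_app (mem_app (mem_app (memA hT') (memA hV)) ?_) (memA hZ)) (memA hY)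
      intro x hx
      simp at hx
      exact Or.inl hx
    -- the commuting list for the s-move: T ++ V ++ [R] ++ Z ++ Y ++ [ai j]
    have hc2 : ∀ x ∈ T ++ V ++ [R] ++ Z ++ Y ++ [ai j], x = R ∨ isA x := by
      apply mem_app hc1
      intro x hx
      simp at hx
      subst hx
      exact Or.inr ha
    calc q (w (Y ++ [P] ++ (ai j :: T) ++ V ++ [R] ++ Z ++ Y ++ [s1, Q] ++ (ai j :: T)))
        = q (w ((Y ++ [P] ++ (ai j :: T) ++ V ++ [R] ++ Z ++ Y) ++ [s1, Q, ai j] ++ T)) :=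
          wcongr (by simp)
      _ = q (w ((Y ++ [P] ++ (ai j :: T) ++ V ++ [R] ++ Z ++ Y) ++ [ti j, ai j, Q] ++ T)) :=
          key _ _ (rel.r11 j)
      _ = q (w ((Y ++ [P] ++ [ai j]) ++ (T ++ V ++ [R] ++ Z ++ Y) ++ [ti j] ++ ([ai j, Q] ++ T))) :=
          wcongr (by simp)
      _ = q (w ((Y ++ [P] ++ [ai j]) ++ [ti j] ++ (T ++ V ++ [R] ++ Z ++ Y) ++ ([ai j, Q] ++ T))) :=
          tmove j _ hc1 _ _
      _ = q (w (Y ++ [P, ai j, ti j] ++ (T ++ V ++ [R] ++ Z ++ Y ++ [ai j, Q] ++ T))) :=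
          wcongr (by simp)
      _ = q (w (Y ++ [ai j, P, s1] ++ (T ++ V ++ [R] ++ Z ++ Y ++ [ai j, Q] ++ T))) :=
          key _ _ (rel.r7 j)
      _ = q (w ((Y ++ [ai j, P]) ++ [s1] ++ (T ++ V ++ [R] ++ Z ++ Y ++ [ai j]) ++ ([Q] ++ T))) :=
          wcongr (by simp)
      _ = q (w ((Y ++ [ai j, P]) ++ (T ++ V ++ [R] ++ Z ++ Y ++ [ai j]) ++ [s1] ++ ([Q] ++ T))) :=
          smove _ hc2 _ _
      _ = q (w ((Y ++ [ai j]) ++ [P] ++ T ++ V ++ [R] ++ Z ++ (Y ++ [ai j]) ++ [s1, Q] ++ T)) :=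
          wcongr (by simp)
      _ = q (w (((Y ++ [ai j]) ++ T) ++ [P] ++ V ++ [R] ++ Z ++ ((Y ++ [ai j]) ++ T) ++ [s1, Q])) :=
          ih hT' (Y ++ [ai j]) V Z (mem_app hY (fun x hx => by simp at hx; subst hx; exact ha))
            hV hZ
      _ = q (w ((Y ++ ai j :: T) ++ [P] ++ V ++ [R] ++ Z ++ (Y ++ ai j :: T) ++ [s1, Q])) :=
          wcongr (by simp)

/-- for any nonempty word `X` and words `V, Z` in `a1,a2,a3`:
`P·X·V·R·Z·s1·Q·X = X·P·V·R·s1·Z·X·Q`. -/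
theorem stmt5 (X V Z : List Phi) (hX : Aword X) (hXne : X ≠ [])
    (hV : Aword V) (hZ : Aword Z) :
    q (w ([P] ++ X ++ V ++ [R] ++ Z ++ [s1, Q] ++ X)) =
      q (w (X ++ [P] ++ V ++ [R, s1] ++ Z ++ X ++ [Q])) := by
  have h1 := inv X hX [] V Z (by intro x hx; simp at hx) hV hZ
  have hc : ∀ x ∈ Z ++ X, x = R ∨ isA x := mem_app (memA hZ) (memA hX)
  calc q (w ([P] ++ X ++ V ++ [R] ++ Z ++ [s1, Q] ++ X))
      = q (w ([] ++ [P] ++ X ++ V ++ [R] ++ Z ++ [] ++ [s1, Q] ++ X)) := wcongr (by simp)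
    _ = q (w (([] ++ X) ++ [P] ++ V ++ [R] ++ Z ++ ([] ++ X) ++ [s1, Q])) := h1
    _ = q (w ((X ++ [P] ++ V ++ [R]) ++ (Z ++ X) ++ [s1] ++ [Q])) := wcongr (by simp)
    _ = q (w ((X ++ [P] ++ V ++ [R]) ++ [s1] ++ (Z ++ X) ++ [Q])) := (smove _ hc _ _).symm
    _ = q (w (X ++ [P] ++ V ++ [R, s1] ++ Z ++ X ++ [Q])) := wcongr (by simp)
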